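/- arXiv:2308.13298 — 5 statements merged into one kernel-verified Lean document; each statement's English description precedes it below -/
import Mathlib

section
/- Let A and B be d×d real positive definite matrices with A ⪰ B (i.e. A − B is positive semidefinite). Then for every x ∈ ℝ^d, xᵀAx ≤ (det A / det B) · xᵀBx. -/
open Matrix Finset

lemma aux_psd {d : ℕ} (M : Matrix (Fin d) (Fin d) ℝ) (hM : M.IsHermitian)
    (h1 : (M - 1).PosSemidef) : (M.det • (1 : Matrix (Fin d) (Fin d) ℝ) - M).PosSemidef := by
  set μ := hM.eigenvalues with hμ
  have hμ1 : ∀ i, 1 ≤ μ i := by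
    intro i
    set v : Fin d → ℝ := ⇑(hM.eigenvectorBasis i) with hv
    have hvv : star v ⬝ᵥ v = 1 := by
      have hnorm : ‖hM.eigenvectorBasis i‖ = 1 := hM.eigenvectorBasis.orthonormal.1 i
      have : (inner ℝ (hM.eigenvectorBasis i) (hM.eigenvectorBasis i) : ℝ) = star v ⬝ᵥ v :=
        EuclideanSpace.inner_eq_star_dotProduct _ _
      rw [real_inner_self_eq_norm_sq, hnorm] at this
      simpa using this.symm
    have h0 := h1.dotProduct_mulVec_nonneg v
    have heig := hM.eigenvalues_eq i
    simp only [sub_mulVec, one_mulVec, dotProduct_sub, RCLike.re_to_real] at h0 heig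
    rw [hvv] at h0
    rw [← hμ] at heig
    linarith [heig ▸ h0]
  have hdet : ∀ i, μ i ≤ M.det := by
    intro i
    have hd : M.det = ∏ j, μ j := by
      simpa using hM.det_eq_prod_eigenvalues
    rw [hd]
    calc μ i = ∏ j, (if j = i then μ j else 1) := by simp
      _ ≤ ∏ j, μ j := Finset.prod_le_prod
          (fun j _ => by split <;> [linarith [hμ1 j]; norm_num])
          (fun j _ => by split <;> [exact le_refl _; exact hμ1 j])
  have hU := hM.spectral_theorem
  set U : Matrix (Fin d) (Fin d) ℝ := (hM.eigenvectorUnitary : Matrix (Fin d) (Fin d) ℝ) with hUdef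
  have hUU : U * star U = 1 := (Matrix.mem_unitaryGroup_iff).mp hM.eigenvectorUnitary.2
  obtain ⟨D, hD⟩ : ∃ D, M.det = D := ⟨_, rfl⟩
  rw [hD] at hdet ⊢
  have key : D • (1 : Matrix (Fin d) (Fin d) ℝ) - M
      = U * diagonal (fun i => D - μ i) * star U := by
    have h1' : (D • (1 : Matrix (Fin d) (Fin d) ℝ)) = U * (D • (1 : Matrix (Fin d) (Fin d) ℝ)) * star U := by
      rw [mul_smul_comm, smul_mul_assoc, mul_one, hUU]
    have hdiag : D • (1 : Matrix (Fin d) (Fin d) ℝ) - diagonal (RCLike.ofReal ∘ hM.eigenvalues)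
        = diagonal (fun i => D - μ i) := by
      ext i j
      by_cases h : i = j <;> simp [diagonal, h, Matrix.one_apply, Function.comp, hμ]
    rw [h1']
    nth_rewrite 1 [hU]
    rw [Unitary.conjStarAlgAut_apply, ← hUdef]
    rw [← sub_mul, ← mul_sub, hdiag]
  rw [key]
  refine Matrix.PosSemidef.mul_mul_conjTranspose_same ?_ U
  exact Matrix.posSemidef_diagonal_iff.mpr fun i => by linarith [hdet i]

/-- If `A ⪰ B` are positive definite, then
`xᵀAx ≤ (det A / det B) · xᵀBx` for every `x`. -/
theorem quadratic_form_det_ratio {d : ℕ} (A B : Matrix (Fin d) (Fin d) ℝ)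
    (hA : A.PosDef) (hB : B.PosDef) (hAB : (A - B).PosSemidef)
    (x : Fin d → ℝ) :
    x ⬝ᵥ A *ᵥ x ≤ (A.det / B.det) * (x ⬝ᵥ B *ᵥ x) := by
  set S := (open scoped MatrixOrder in CFC.sqrt B) with hSdef
  have hSpsd : S.PosSemidef := by open scoped MatrixOrder in exact (CFC.sqrt_nonneg B).posSemidef
  have hSherm : S.IsHermitian := hSpsd.1
  have hSS : S * S = B := by open scoped MatrixOrder in exact CFC.sqrt_mul_sqrt_self B hB.posSemidef.nonneg
  have hdetS : S.det * S.det = B.det := by rw [← Matrix.det_mul, hSS]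
  have hdetSne : S.det ≠ 0 := by
    intro h
    rw [h, mul_zero] at hdetS
    exact hB.det_pos.ne' hdetS.symm
  have hSunit : IsUnit S.det := isUnit_iff_ne_zero.mpr hdetSne
  set T := S⁻¹ with hTdef
  have hTS : T * S = 1 := Matrix.nonsing_inv_mul S hSunit
  have hST : S * T = 1 := Matrix.mul_nonsing_inv S hSunit
  have hTherm : T.IsHermitian := hSherm.inv
  set M := T * A * T with hMdef
  have hMherm : M.IsHermitian := by
    show Mᴴ = M
    rw [hMdef, Matrix.conjTranspose_mul, Matrix.conjTranspose_mul, hTherm.eq,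
      hA.isHermitian.eq, Matrix.mul_assoc]
  have hTBT : T * B * T = 1 := by
    rw [← hSS, ← Matrix.mul_assoc T S S, hTS, one_mul, hST]
  have hM1 : (M - 1).PosSemidef := by
    have h := hAB.mul_mul_conjTranspose_same T
    have he : T * (A - B) * Tᴴ = M - 1 := by
      rw [hTherm.eq, Matrix.mul_sub, Matrix.sub_mul, hTBT, hMdef]
    rwa [he] at h
  have hdetT : T.det * S.det = 1 := by rw [← Matrix.det_mul, hTS, Matrix.det_one]
  have hdetM : M.det = A.det / B.det := by
    have h2 : M.det * B.det = A.det := by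
      rw [hMdef, Matrix.det_mul, Matrix.det_mul, ← hdetS]
      calc T.det * A.det * T.det * (S.det * S.det)
          = A.det * ((T.det * S.det) * (T.det * S.det)) := by ring
        _ = A.det := by rw [hdetT]; ring
    rw [eq_div_iff hB.det_pos.ne']
    exact h2
  have hpsd := (aux_psd M hMherm hM1).dotProduct_mulVec_nonneg (S *ᵥ x)
  set y := S *ᵥ x with hy
  have hdot : ∀ w, (S *ᵥ x) ⬝ᵥ w = x ⬝ᵥ (S *ᵥ w) := by
    intro w
    rw [Matrix.dotProduct_mulVec x S w]
    congr 1
    have hSsymm : Sᵀ = S := by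
      ext i j
      have h := congrFun (congrFun hSherm.eq i) j
      simpa [Matrix.conjTranspose_apply] using h
    rw [← Matrix.mulVec_transpose, hSsymm]
  have hSA : S * (M * S) = A := by
    simp only [hMdef, Matrix.mul_assoc]
    rw [hTS, mul_one, ← Matrix.mul_assoc, hST, one_mul]
  have hqA : y ⬝ᵥ (M *ᵥ y) = x ⬝ᵥ A *ᵥ x := by
    rw [hy, Matrix.mulVec_mulVec, hdot, Matrix.mulVec_mulVec, hSA]
  have hqB : y ⬝ᵥ y = x ⬝ᵥ B *ᵥ x := by
    rw [hy, hdot, Matrix.mulVec_mulVec, hSS]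
  have hexp : star y ⬝ᵥ ((M.det • (1 : Matrix (Fin d) (Fin d) ℝ) - M) *ᵥ y)
      = M.det * (y ⬝ᵥ y) - y ⬝ᵥ (M *ᵥ y) := by
    rw [star_trivial, Matrix.sub_mulVec, dotProduct_sub,
      Matrix.smul_mulVec, Matrix.one_mulVec, dotProduct_smul]
    simp [smul_eq_mul]
  rw [hexp, hqA, hqB, hdetM] at hpsd
  simpa using hpsd
end

section
/- Let A and B be d×d real positive definite matrices with A ⪰ B (i.e. A − B is positive semidefinite). Then for every x ∈ ℝ^d, xᵀB⁻¹x ≤ (det A / det B) · xᵀA⁻¹x; equivalently ‖x‖_{B⁻¹} ≤ ‖x‖_{A⁻¹} · √(det A / det B). -/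
open Matrix

/-- If `A ⪰ B` are positive definite, then
`xᵀB⁻¹x ≤ (det A / det B) · xᵀA⁻¹x`; equivalently
`‖x‖_{B⁻¹} ≤ ‖x‖_{A⁻¹}·√(det A / det B)`. -/
theorem inv_quadratic_form_det_ratio {d : ℕ} (A B : Matrix (Fin d) (Fin d) ℝ)
    (hA : A.PosDef) (hB : B.PosDef) (hAB : (A - B).PosSemidef)
    (x : Fin d → ℝ) :
    x ⬝ᵥ B⁻¹ *ᵥ x ≤ (A.det / B.det) * (x ⬝ᵥ A⁻¹ *ᵥ x) ∧
    Real.sqrt (x ⬝ᵥ B⁻¹ *ᵥ x)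
      ≤ Real.sqrt (x ⬝ᵥ A⁻¹ *ᵥ x) * Real.sqrt (A.det / B.det) := by
  set c : ℝ := A.det / B.det with hc
  have hc0 : 0 < c := div_pos hA.det_pos hB.det_pos
  -- square root of B
  set T : Matrix (Fin d) (Fin d) ℝ := (open scoped MatrixOrder in CFC.sqrt B) with hTdef
  have hTH : T.IsHermitian := by
    open scoped MatrixOrder in exact (CFC.sqrt_nonneg B).posSemidef.1
  have hTT : T * T = B := by
    open scoped MatrixOrder in exact CFC.sqrt_mul_sqrt_self B hB.posSemidef.nonneg
  have hdetT : T.det ≠ 0 := by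
    intro h
    have : B.det = 0 := by rw [← hTT, det_mul, h, mul_zero]
    exact hB.det_pos.ne' this
  have hTiT : T⁻¹ * T = 1 := Matrix.nonsing_inv_mul T (isUnit_iff_ne_zero.mpr hdetT)
  have hTTi : T * T⁻¹ = 1 := Matrix.mul_nonsing_inv T (isUnit_iff_ne_zero.mpr hdetT)
  have hTiH : (T⁻¹).IsHermitian := by
    rw [Matrix.IsHermitian, Matrix.conjTranspose_nonsing_inv, hTH.eq]
  -- N = T⁻¹ A T⁻¹
  set N := T⁻¹ * A * T⁻¹ with hNdef
  have hNps : N.PosSemidef := by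
    have := hA.posSemidef.mul_mul_conjTranspose_same T⁻¹
    rwa [hTiH.eq] at this
  have hNH : N.IsHermitian := hNps.1
  set μ : Fin d → ℝ := hNH.eigenvalues with hμdef
  set U : Matrix (Fin d) (Fin d) ℝ := (hNH.eigenvectorUnitary : Matrix (Fin d) (Fin d) ℝ)
    with hUdef
  have hU1 : U * Uᴴ = 1 := by
    rw [← Matrix.star_eq_conjTranspose]
    exact (Matrix.mem_unitaryGroup_iff).mp (hNH.eigenvectorUnitary).2
  have hU2 : Uᴴ * U = 1 := by
    rw [← Matrix.star_eq_conjTranspose]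
    exact (Matrix.mem_unitaryGroup_iff').mp (hNH.eigenvectorUnitary).2
  have hspec : N = U * diagonal μ * Uᴴ := by
    have := hNH.spectral_theorem
    rw [RCLike.ofReal_real_eq_id] at this
    simpa [Matrix.star_eq_conjTranspose] using this
  -- N - 1 is PSD
  have hN1 : (N - 1).PosSemidef := by
    have h1 : T⁻¹ * B * T⁻¹ = 1 := by
      rw [← hTT, show T⁻¹ * (T * T) * T⁻¹ = (T⁻¹ * T) * (T * T⁻¹) by
        simp only [Matrix.mul_assoc], hTiT, hTTi, Matrix.one_mul]
    have h2 : T⁻¹ * (A - B) * T⁻¹ = N - 1 := by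
      rw [Matrix.mul_sub, Matrix.sub_mul, hNdef, h1]
    have := hAB.mul_mul_conjTranspose_same T⁻¹
    rwa [hTiH.eq, h2] at this
  -- eigenvalues are ≥ 1
  have hmu1 : ∀ i, 1 ≤ μ i := by
    intro i
    set v : Fin d → ℝ := ⇑(hNH.eigenvectorBasis i) with hvdef
    have h0 := hN1.dotProduct_mulVec_nonneg v
    have hvv : star v ⬝ᵥ v = 1 := by
      have h := hNH.eigenvectorBasis.orthonormal.1 i
      have := EuclideanSpace.inner_eq_star_dotProduct (𝕜 := ℝ)
        (hNH.eigenvectorBasis i) (hNH.eigenvectorBasis i)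
      rw [inner_self_eq_norm_sq_to_K, h] at this
      simpa [hvdef] using this.symm
    rw [Matrix.sub_mulVec, dotProduct_sub, Matrix.one_mulVec, hvv, sub_nonneg] at h0
    have heq := hNH.eigenvalues_eq i
    rw [hμdef]
    rw [heq]
    simpa [hvdef] using h0
  have hmupos : ∀ i, 0 < μ i := fun i => lt_of_lt_of_le one_pos (hmu1 i)
  -- det N = c
  have hdetN : N.det = c := by
    have hb : T.det * T.det = B.det := by rw [← det_mul, hTT]
    rw [hNdef, det_mul, det_mul, Matrix.det_nonsing_inv, Ring.inverse_eq_inv']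
    rw [hc, ← hb]
    field_simp
  have hprod : ∏ i, μ i = c := by
    have := hNH.det_eq_prod_eigenvalues
    rw [hdetN] at this
    simpa using this.symm
  -- each eigenvalue is at most c
  have hmuc : ∀ i, μ i ≤ c := by
    intro i
    rw [← hprod, ← Finset.mul_prod_erase Finset.univ μ (Finset.mem_univ i)]
    nth_rewrite 1 [← mul_one (μ i)]
    apply mul_le_mul_of_nonneg_left _ (hmupos i).le
    calc (1 : ℝ) = ∏ _j ∈ Finset.univ.erase i, (1 : ℝ) := by simp
      _ ≤ ∏ j ∈ Finset.univ.erase i, μ j :=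
        Finset.prod_le_prod (fun j _ => zero_le_one) (fun j _ => hmu1 j)
  -- the diagonal gap matrix
  set g : Fin d → ℝ := fun i => c * (μ i)⁻¹ - 1 with hgdef
  have hg : ∀ i, 0 ≤ g i := by
    intro i
    rw [hgdef]
    have : (1 : ℝ) ≤ c * (μ i)⁻¹ := by
      rw [← div_eq_mul_inv, le_div_iff₀ (hmupos i)]
      simpa using hmuc i
    linarith
  -- inverses
  have hBinv : B⁻¹ = T⁻¹ * T⁻¹ := by
    apply Matrix.inv_eq_right_inv
    rw [← hTT, Matrix.mul_assoc, ← Matrix.mul_assoc T T⁻¹, hTTi, Matrix.one_mul, hTTi]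
  have hDD : diagonal μ * diagonal (fun i => (μ i)⁻¹) = 1 := by
    rw [diagonal_mul_diagonal]
    have h1 : (fun i => μ i * (μ i)⁻¹) = fun _ => (1 : ℝ) :=
      funext fun i => mul_inv_cancel₀ (hmupos i).ne'
    rw [h1]
    simp [← Matrix.diagonal_one]
  have hAeq : A = T * (U * diagonal μ * Uᴴ) * T := by
    rw [← hspec, hNdef, ← Matrix.mul_assoc, ← Matrix.mul_assoc, hTTi, Matrix.one_mul,
      Matrix.mul_assoc, hTiT, Matrix.mul_one]
  have hAinv : A⁻¹ = T⁻¹ * (U * diagonal (fun i => (μ i)⁻¹) * Uᴴ) * T⁻¹ := by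
    apply Matrix.inv_eq_right_inv
    rw [hAeq]
    calc T * (U * diagonal μ * Uᴴ) * T * (T⁻¹ * (U * diagonal (fun i => (μ i)⁻¹) * Uᴴ) * T⁻¹)
        = T * (U * (diagonal μ * ((Uᴴ * (T * T⁻¹) * U) * diagonal (fun i => (μ i)⁻¹)) * Uᴴ))
          * T⁻¹ := by
          simp only [Matrix.mul_assoc]
      _ = 1 := by
          rw [hTTi, Matrix.mul_one, hU2, Matrix.one_mul, hDD, Matrix.one_mul, hU1,
            Matrix.mul_one, hTTi]
  -- the key PSD matrix
  have hmain : c • A⁻¹ - B⁻¹ = (T⁻¹ * U) * diagonal g * (T⁻¹ * U)ᴴ := by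
    have hgd : diagonal g = c • diagonal (fun i => (μ i)⁻¹) - 1 := by
      rw [← diagonal_smul, ← Matrix.diagonal_one, ← diagonal_sub]
      rfl
    rw [hgd, Matrix.mul_sub, Matrix.sub_mul, Matrix.mul_one, Matrix.conjTranspose_mul,
      hTiH.eq, hAinv, hBinv]
    congr 1
    · rw [Matrix.mul_smul, Matrix.smul_mul]
      congr 1
      simp only [Matrix.mul_assoc]
    · rw [Matrix.mul_assoc, ← Matrix.mul_assoc U, hU1, Matrix.one_mul]
  have hPSD : (c • A⁻¹ - B⁻¹).PosSemidef := by
    rw [hmain]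
    exact (Matrix.PosSemidef.diagonal hg).mul_mul_conjTranspose_same _
  have key : x ⬝ᵥ B⁻¹ *ᵥ x ≤ c * (x ⬝ᵥ A⁻¹ *ᵥ x) := by
    have h := hPSD.dotProduct_mulVec_nonneg x
    rw [Matrix.sub_mulVec, dotProduct_sub, Matrix.smul_mulVec, dotProduct_smul,
      star_trivial] at h
    simpa [sub_nonneg, smul_eq_mul] using h
  refine ⟨key, ?_⟩
  calc Real.sqrt (x ⬝ᵥ B⁻¹ *ᵥ x) ≤ Real.sqrt (c * (x ⬝ᵥ A⁻¹ *ᵥ x)) := Real.sqrt_le_sqrt key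
    _ = Real.sqrt (x ⬝ᵥ A⁻¹ *ᵥ x) * Real.sqrt c := by
        rw [Real.sqrt_mul hc0.le, mul_comm]
end

section
/- (Elliptical potential lemma) Let V₀ be a d×d real positive definite matrix, let x_1, …, x_n ∈ ℝ^d, and define V_t := V₀ + Σ_{s=1}^{t} x_s x_sᵀ for t = 0, 1, …, n. Then Σ_{t=1}^{n} min(1, x_tᵀ V_{t-1}⁻¹ x_t) ≤ 2 log(det V_n / det V₀). -/
open Matrix

lemma vecMulVec_posSemidef {d : ℕ} (v : Fin d → ℝ) :
    (vecMulVec v v).PosSemidef := by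
  rw [vecMulVec_eq Unit]
  have : replicateRow Unit v = (replicateCol Unit v)ᴴ := by
    rw [conjTranspose_replicateCol]; simp
  rw [this]
  exact posSemidef_self_mul_conjTranspose _

lemma min_one_le_two_log {u : ℝ} (hu : 0 ≤ u) :
    min 1 u ≤ 2 * Real.log (1 + u) := by
  rcases le_total u 1 with h | h
  · rw [min_eq_right h]
    have h1 : (0:ℝ) < 1 + u := by linarith
    have hlog : 1 - (1 + u)⁻¹ ≤ Real.log (1 + u) :=
      Real.one_sub_inv_le_log_of_pos h1
    have : u / (1 + u) = 1 - (1 + u)⁻¹ := by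
      field_simp; ring
    have h2 : u / (1 + u) ≤ Real.log (1 + u) := by rw [this]; exact hlog
    have h3 : u ≤ 2 * (u / (1 + u)) := by
      rw [← mul_div_assoc, le_div_iff₀ h1]
      nlinarith
    calc u ≤ 2 * (u / (1 + u)) := h3
      _ ≤ 2 * Real.log (1 + u) := by linarith
  · rw [min_eq_left h]
    have h2 : Real.log 2 ≤ Real.log (1 + u) := by
      apply Real.log_le_log (by norm_num)
      linarith
    have := Real.log_two_gt_d9
    linarith

/-- Elliptical potential lemma: with `V_t = V₀ + Σ_{s<t} x_s x_sᵀ`,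
`Σ_{t=1}^{n} min(1, x_tᵀ V_{t-1}⁻¹ x_t) ≤ 2 log(det V_n / det V₀)`. -/
theorem elliptical_potential {d n : ℕ} (V₀ : Matrix (Fin d) (Fin d) ℝ)
    (hV₀ : V₀.PosDef) (x : ℕ → (Fin d → ℝ))
    (V : ℕ → Matrix (Fin d) (Fin d) ℝ)
    (hV : ∀ t, V t = V₀ + ∑ s ∈ Finset.range t, vecMulVec (x s) (x s)) :
    ∑ t ∈ Finset.range n, min 1 (x t ⬝ᵥ (V t)⁻¹ *ᵥ x t)
      ≤ 2 * Real.log ((V n).det / V₀.det) := by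
  set u : ℕ → ℝ := fun t => x t ⬝ᵥ (V t)⁻¹ *ᵥ x t with hu_def
  -- every V t is positive definite
  have hPD : ∀ t, (V t).PosDef := by
    intro t
    rw [hV t]
    refine hV₀.add_posSemidef ?_
    exact Finset.sum_induction _ _ (fun a b ha hb => ha.add hb) Matrix.PosSemidef.zero
      (fun s _ => vecMulVec_posSemidef (x s))
  -- quadratic forms are nonnegative
  have hu0 : ∀ t, 0 ≤ u t := by
    intro t
    have := ((hPD t).inv.posSemidef).dotProduct_mulVec_nonneg (x t)
    simpa [hu_def] using this
  -- determinant recursion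
  have hdet : ∀ t, (V (t + 1)).det = (V t).det * (1 + u t) := by
    intro t
    have hstep : V (t + 1) = V t + replicateCol Unit (x t) * replicateRow Unit (x t) := by
      rw [hV (t + 1), hV t, Finset.sum_range_succ, ← add_assoc, vecMulVec_eq Unit]
    rw [hstep, det_add_replicateCol_mul_replicateRow (hPD t).det_pos.ne'.isUnit]
    congr 1
    rw [det_unique, Matrix.mul_assoc, ← replicateCol_mulVec]
    simp [hu_def]
  -- determinant product formula
  have hprod : ∀ m, (V m).det = V₀.det * ∏ t ∈ Finset.range m, (1 + u t) := by
    intro m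
    induction m with
    | zero => simp [hV 0]
    | succ m ih => rw [hdet m, ih, Finset.prod_range_succ]; ring
  have hdet0 : (0:ℝ) < V₀.det := hV₀.det_pos
  have hratio : (V n).det / V₀.det = ∏ t ∈ Finset.range n, (1 + u t) := by
    rw [hprod n]; field_simp
  have hlog : Real.log ((V n).det / V₀.det)
      = ∑ t ∈ Finset.range n, Real.log (1 + u t) := by
    rw [hratio, Real.log_prod]
    intro t _
    have := hu0 t
    positivity
  rw [hlog, Finset.mul_sum]
  exact Finset.sum_le_sum fun t _ => min_one_le_two_log (hu0 t)
end

section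
/- Let V₀ be a d×d real positive definite matrix, let x_1, …, x_m ∈ ℝ^d, and define V_t := V₀ + Σ_{s=1}^{t} x_s x_sᵀ for t = 0, 1, …, m. Suppose x_tᵀ V_{t-1}⁻¹ x_t ≤ 1 for every t, and that m · log(det V_m / det V₀) ≤ D for some D ≥ 0. Then Σ_{t=1}^{m} √(x_tᵀ V_{t-1}⁻¹ x_t) ≤ √(2D). -/
open Matrix

lemma aux_le_two_log (u : ℝ) (h0 : 0 ≤ u) (h1 : u ≤ 1) : u ≤ 2 * Real.log (1 + u) := by
  have h1u : (0:ℝ) < 1 + u := by linarith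
  have key : Real.exp (u/2) ≤ 1 + u := by
    have hb := Real.add_one_le_exp (-(u/2))
    have hab : Real.exp (u/2) * Real.exp (-(u/2)) = 1 := by rw [← Real.exp_add]; simp
    nlinarith [Real.exp_pos (u/2), Real.exp_pos (-(u/2))]
  have := (Real.le_log_iff_exp_le h1u).mpr key
  linarith

lemma aux_det_lemma {d : ℕ} {A : Matrix (Fin d) (Fin d) ℝ} (hA : A.PosDef) (x : Fin d → ℝ) :
    (A + vecMulVec x x).det = A.det * (1 + x ⬝ᵥ A⁻¹ *ᵥ x) := by
  have hU : IsUnit A.det := hA.det_pos.ne'.isUnit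
  rw [vecMulVec_eq Unit, det_add_replicateCol_mul_replicateRow hU]
  congr 1
  simp only [det_unique, Matrix.add_apply, Matrix.one_apply_eq, Matrix.mul_assoc]
  simp only [vecMul, mul_apply, dotProduct, mulVec, replicateCol, replicateRow, Finset.mul_sum, Finset.sum_mul]
  rw [Finset.sum_comm]
  refine congrArg _ (Finset.sum_congr rfl fun i _ => Finset.sum_congr rfl fun j _ => by
    rw [show A⁻¹ j i = A⁻¹ i j from (star_trivial _).symm.trans (hA.inv.isHermitian.apply i j)]
    simp; ring)

lemma aux_vecMulVec_psd {d : ℕ} (x : Fin d → ℝ) : (vecMulVec x x).PosSemidef := by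
  rw [vecMulVec_eq Unit]
  have h : (replicateRow Unit x)ᴴ = replicateCol Unit x := by ext i j; simp
  rw [← h]
  exact posSemidef_conjTranspose_mul_self _

/-- Per-period regret bound under the event trigger: with
`V_t = V₀ + Σ_{s<t} x_s x_sᵀ`, if `x_tᵀ V_{t-1}⁻¹ x_t ≤ 1` for all `t` and
`m·log(det V_m / det V₀) ≤ D`, then `Σ_{t=1}^{m} √(x_tᵀ V_{t-1}⁻¹ x_t) ≤ √(2D)`. -/
theorem sum_sqrt_bonus_le_sqrt_two_D {d m : ℕ}
    (V₀ : Matrix (Fin d) (Fin d) ℝ) (hV₀ : V₀.PosDef)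
    (x : ℕ → (Fin d → ℝ)) (V : ℕ → Matrix (Fin d) (Fin d) ℝ)
    (hV : ∀ t, V t = V₀ + ∑ s ∈ Finset.range t, vecMulVec (x s) (x s))
    (hsmall : ∀ t < m, x t ⬝ᵥ (V t)⁻¹ *ᵥ x t ≤ 1)
    (D : ℝ) (hD : 0 ≤ D)
    (hthresh : m * Real.log ((V m).det / (V 0).det) ≤ D) :
    ∑ t ∈ Finset.range m, Real.sqrt (x t ⬝ᵥ (V t)⁻¹ *ᵥ x t)
      ≤ Real.sqrt (2 * D) := by
  set u : ℕ → ℝ := fun t => x t ⬝ᵥ (V t)⁻¹ *ᵥ x t with hu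
  -- positive definiteness of all V t
  have hpd : ∀ t, (V t).PosDef := by
    intro t
    rw [hV t]
    refine hV₀.add_posSemidef ?_
    refine Finset.sum_induction _ _ (fun a b ha hb => ha.add hb) ?_ (fun s _ => aux_vecMulVec_psd (x s))
    simpa using Matrix.PosSemidef.zero
  -- nonnegativity of u
  have hu0 : ∀ t, 0 ≤ u t := by
    intro t
    have := (hpd t).inv.posSemidef.dotProduct_mulVec_nonneg (x t)
    simpa using this
  -- determinant recursion
  have hdet : ∀ t, (V (t+1)).det = (V t).det * (1 + u t) := by
    intro t
    have hstep : V (t+1) = V t + vecMulVec (x t) (x t) := by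
      rw [hV (t+1), hV t, Finset.sum_range_succ, add_assoc]
    rw [hstep, aux_det_lemma (hpd t)]
  have hdetpos : ∀ t, 0 < (V t).det := fun t => (hpd t).det_pos
  -- log telescoping
  have hlog : ∀ t, Real.log ((V (t+1)).det) - Real.log ((V t).det) = Real.log (1 + u t) := by
    intro t
    rw [hdet t, Real.log_mul (hdetpos t).ne' (by nlinarith [hu0 t])]
    ring
  have hsumlog : ∑ t ∈ Finset.range m, Real.log (1 + u t)
      = Real.log ((V m).det / (V 0).det) := by
    rw [Real.log_div (hdetpos m).ne' (hdetpos 0).ne']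
    rw [← Finset.sum_range_sub (fun t => Real.log ((V t).det))]
    exact Finset.sum_congr rfl fun t _ => (hlog t).symm
  -- sum bound
  have hL0 : 0 ≤ Real.log ((V m).det / (V 0).det) := by
    rw [← hsumlog]
    refine Finset.sum_nonneg fun t _ => Real.log_nonneg (by nlinarith [hu0 t])
  have hsumu : ∑ t ∈ Finset.range m, u t ≤ 2 * Real.log ((V m).det / (V 0).det) := by
    rw [← hsumlog, Finset.mul_sum]
    refine Finset.sum_le_sum fun t ht => aux_le_two_log (u t) (hu0 t)
      (hsmall t (Finset.mem_range.mp ht))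
  -- Cauchy-Schwarz
  have hcs : (∑ t ∈ Finset.range m, Real.sqrt (u t)) ^ 2
      ≤ m * ∑ t ∈ Finset.range m, u t := by
    have := sq_sum_le_card_mul_sum_sq (s := Finset.range m)
      (f := fun t => Real.sqrt (u t))
    simpa [Real.sq_sqrt, hu0, Finset.card_range] using this
  have hfinal : (∑ t ∈ Finset.range m, Real.sqrt (u t)) ^ 2 ≤ 2 * D := by
    calc (∑ t ∈ Finset.range m, Real.sqrt (u t)) ^ 2
        ≤ m * ∑ t ∈ Finset.range m, u t := hcs
      _ ≤ m * (2 * Real.log ((V m).det / (V 0).det)) := by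
          exact mul_le_mul_of_nonneg_left hsumu (Nat.cast_nonneg m)
      _ = 2 * (m * Real.log ((V m).det / (V 0).det)) := by ring
      _ ≤ 2 * D := by linarith
  have hnn : 0 ≤ ∑ t ∈ Finset.range m, Real.sqrt (u t) :=
    Finset.sum_nonneg fun t _ => Real.sqrt_nonneg _
  calc ∑ t ∈ Finset.range m, Real.sqrt (u t)
      = Real.sqrt ((∑ t ∈ Finset.range m, Real.sqrt (u t)) ^ 2) := by
        rw [Real.sqrt_sq hnn]
    _ ≤ Real.sqrt (2 * D) := Real.sqrt_le_sqrt hfinal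
end

section
/- Let V be a d×d real positive definite matrix and N a d×d real positive semidefinite matrix with V ⪰ N. If the operator norm of N satisfies ‖N‖ ≤ γ_max and θ ∈ ℝ^d satisfies ‖θ‖ ≤ S, then ‖Nθ‖_{V⁻¹} ≤ S·√(γ_max); more precisely, (Nθ)ᵀ V⁻¹ (Nθ) ≤ θᵀ N θ ≤ γ_max · S². -/
open Matrix
open scoped Matrix.Norms.L2Operator

/-- Bias bound for the channel-noise regularizer: if `V ⪰ N ⪰ 0`, `V` is
positive definite, `‖N‖ ≤ γ_max` (operator norm) and `‖θ‖ ≤ S`, then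
`(Nθ)ᵀV⁻¹(Nθ) ≤ θᵀNθ ≤ γ_max·S²`, hence `‖Nθ‖_{V⁻¹} ≤ S·√γ_max`. -/
theorem channel_noise_bias_bound {d : ℕ}
    (V N : Matrix (Fin d) (Fin d) ℝ) (hV : V.PosDef) (hN : N.PosSemidef)
    (hVN : (V - N).PosSemidef) (γmax S : ℝ)
    (hγ : ‖N‖ ≤ γmax) (θ : Fin d → ℝ)
    (hθ : Real.sqrt (θ ⬝ᵥ θ) ≤ S) :
    (N *ᵥ θ) ⬝ᵥ V⁻¹ *ᵥ (N *ᵥ θ) ≤ θ ⬝ᵥ N *ᵥ θ ∧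
    θ ⬝ᵥ N *ᵥ θ ≤ γmax * S ^ 2 ∧
    Real.sqrt ((N *ᵥ θ) ⬝ᵥ V⁻¹ *ᵥ (N *ᵥ θ)) ≤ S * Real.sqrt γmax := by
  have hS0 : 0 ≤ S := le_trans (Real.sqrt_nonneg _) hθ
  have hγ0 : 0 ≤ γmax := le_trans (norm_nonneg _) hγ
  -- symmetry of N
  have hNT : Nᵀ = N := by
    have := hN.1
    simpa [Matrix.IsHermitian, Matrix.conjTranspose_eq_transpose_of_trivial] using this
  have hsym : ∀ a b : Fin d → ℝ, a ⬝ᵥ N *ᵥ b = b ⬝ᵥ N *ᵥ a := by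
    intro a b
    rw [Matrix.dotProduct_mulVec, ← Matrix.mulVec_transpose, hNT, dotProduct_comm]
  -- Part 1
  set w : Fin d → ℝ := V⁻¹ *ᵥ (N *ᵥ θ) with hw
  have hVw : V *ᵥ w = N *ᵥ θ := by
    rw [hw, Matrix.mulVec_mulVec, Matrix.mul_nonsing_inv V (isUnit_iff_ne_zero.mpr hV.det_pos.ne'), Matrix.one_mulVec]
  have h1 : 0 ≤ (θ - w) ⬝ᵥ N *ᵥ (θ - w) := by have := hN.dotProduct_mulVec_nonneg (θ - w); rwa [star_trivial] at this
  have h2 : 0 ≤ w ⬝ᵥ (V - N) *ᵥ w := by have := hVN.dotProduct_mulVec_nonneg w; rwa [star_trivial] at this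
  have h1' : 0 ≤ θ ⬝ᵥ N *ᵥ θ - 2 * (w ⬝ᵥ N *ᵥ θ) + w ⬝ᵥ N *ᵥ w := by
    have : (θ - w) ⬝ᵥ N *ᵥ (θ - w)
        = θ ⬝ᵥ N *ᵥ θ - θ ⬝ᵥ N *ᵥ w - w ⬝ᵥ N *ᵥ θ + w ⬝ᵥ N *ᵥ w := by
      rw [Matrix.mulVec_sub, sub_dotProduct, dotProduct_sub,
        dotProduct_sub]
      ring
    rw [this, hsym θ w] at h1
    linarith
  have h2' : w ⬝ᵥ N *ᵥ w ≤ w ⬝ᵥ N *ᵥ θ := by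
    have : w ⬝ᵥ (V - N) *ᵥ w = w ⬝ᵥ V *ᵥ w - w ⬝ᵥ N *ᵥ w := by
      rw [Matrix.sub_mulVec, dotProduct_sub]
    rw [this, hVw] at h2
    linarith
  have part1 : (N *ᵥ θ) ⬝ᵥ V⁻¹ *ᵥ (N *ᵥ θ) ≤ θ ⬝ᵥ N *ᵥ θ := by
    have : (N *ᵥ θ) ⬝ᵥ V⁻¹ *ᵥ (N *ᵥ θ) = w ⬝ᵥ N *ᵥ θ := by
      rw [hw, dotProduct_comm]
    rw [this]
    linarith
  -- Part 2
  have part2 : θ ⬝ᵥ N *ᵥ θ ≤ γmax * S ^ 2 := by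
    set θ' : EuclideanSpace ℝ (Fin d) := (EuclideanSpace.equiv (Fin d) ℝ).symm θ with hθ'
    have hnθ : ‖θ'‖ ≤ S := by
      rw [EuclideanSpace.norm_eq]
      convert hθ using 2
      simp [hθ', dotProduct, sq, Real.norm_eq_abs, abs_mul_abs_self]
    have hmv : ‖(EuclideanSpace.equiv (Fin d) ℝ).symm (N *ᵥ θ)‖ ≤ ‖N‖ * ‖θ'‖ :=
      N.l2_opNorm_mulVec θ'
    have hcs : θ ⬝ᵥ N *ᵥ θ ≤ ‖θ'‖ * ‖(EuclideanSpace.equiv (Fin d) ℝ).symm (N *ᵥ θ)‖ := by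
      have h := real_inner_le_norm θ' ((EuclideanSpace.equiv (Fin d) ℝ).symm (N *ᵥ θ))
      have heq : inner ℝ θ' ((EuclideanSpace.equiv (Fin d) ℝ).symm (N *ᵥ θ)) = θ ⬝ᵥ N *ᵥ θ := by
        simp [hθ', PiLp.inner_apply, RCLike.inner_apply, dotProduct, mul_comm]
      rw [heq] at h
      exact h
    calc θ ⬝ᵥ N *ᵥ θ ≤ ‖θ'‖ * ‖(EuclideanSpace.equiv (Fin d) ℝ).symm (N *ᵥ θ)‖ := hcs
      _ ≤ ‖θ'‖ * (‖N‖ * ‖θ'‖) := by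
          apply mul_le_mul_of_nonneg_left hmv (norm_nonneg _)
      _ ≤ S * (γmax * S) := by
          apply mul_le_mul hnθ (mul_le_mul hγ hnθ (norm_nonneg _) hγ0)
            (mul_nonneg (norm_nonneg _) (norm_nonneg _)) hS0
      _ = γmax * S ^ 2 := by ring
  refine ⟨part1, part2, ?_⟩
  calc Real.sqrt ((N *ᵥ θ) ⬝ᵥ V⁻¹ *ᵥ (N *ᵥ θ))
      ≤ Real.sqrt (γmax * S ^ 2) := Real.sqrt_le_sqrt (le_trans part1 part2)
    _ = S * Real.sqrt γmax := by
        rw [Real.sqrt_mul hγ0, Real.sqrt_sq hS0, mul_comm]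
end
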